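/- Let H be a finite abelian group of order m and K a finite group of order n with gcd(m, n) = 1, and let G = H × K. Then for every multiplicative Lie algebra structure ⋆̃ on G, the subgroup H × {1} is an ideal of (G, ⋆̃); that is, for every a ∈ H × {1} and every g ∈ G, a ⋆̃ g ∈ H × {1}. -/

import Mathlib

/-- A multiplicative Lie algebra structure on a group `G`. -/
def IsMulLieAlgebra {G : Type*} [Group G] (star : G → G → G) : Prop :=
  (∀ x, star x x = 1) ∧
  (∀ x y z, star x (y * z) = star x y * (y * star x z * y⁻¹)) ∧
  (∀ x y z, star (x * y) z = (x * star y z * x⁻¹) * star x z) ∧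
  (∀ x y z,
    star (star x y) (y * z * y⁻¹) * star (star y z) (z * x * z⁻¹) *
      star (star z x) (x * y * x⁻¹) = 1) ∧
  (∀ x y z, z * star x y * z⁻¹ = star (z * x * z⁻¹) (z * y * z⁻¹))

lemma star_one_left {G : Type*} [Group G] (star : G → G → G)
    (h : IsMulLieAlgebra star) (z : G) : star 1 z = 1 := by
  have := h.2.2.1 1 1 z
  simp only [one_mul, inv_one, mul_one] at this
  exact (mul_eq_left.mp this.symm)

/-- if `G = H × K` with `|H| = m`, `|K| = n` and `gcd(m, n) = 1`,
then for every multiplicative Lie algebra structure `⋆̃` on `G` the subgroup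
`H × {1}` is an ideal: `a ⋆̃ g ∈ H × {1}` for all `a ∈ H × {1}`, `g ∈ G`. -/
theorem coprime_ideal {H K : Type*} [CommGroup H] [Finite H] [Group K] [Finite K]
    (hcop : Nat.Coprime (Nat.card H) (Nat.card K))
    (tstar : H × K → H × K → H × K) (htstar : IsMulLieAlgebra tstar) :
    ∀ (a : H) (g : H × K),
      tstar (a, 1) g ∈ Set.range (fun h : H => ((h, 1) : H × K)) := by
  intro a g
  set u : K := (tstar (a, 1) g).2 with hu
  -- key: K-component of tstar ((a,1)^n) g = u^n
  have key : ∀ n : ℕ, (tstar ((a, 1) ^ n) g).2 = u ^ n := by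
    intro n
    induction n with
    | zero => simp [star_one_left tstar htstar]
    | succ n ih =>
        have h3 := htstar.2.2.1 ((a, 1) ^ n) ((a, 1) : H × K) g
        rw [← pow_succ] at h3
        rw [h3]
        simp only [Prod.snd_mul, Prod.snd_inv, Prod.pow_snd, Prod.snd_one, ih, ← hu,
          one_pow, one_mul, inv_one, mul_one, pow_succ']
  have hm : u ^ Nat.card H = 1 := by
    have hpow : ((a, 1) : H × K) ^ Nat.card H = 1 := by
      have : a ^ Nat.card H = 1 := pow_card_eq_one'
      simp [Prod.pow_mk, this]
    have := key (Nat.card H)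
    rw [hpow, star_one_left tstar htstar] at this
    exact this.symm
  have hn : u ^ Nat.card K = 1 := pow_card_eq_one'
  have hord : orderOf u = 1 := by
    have d1 := orderOf_dvd_of_pow_eq_one hm
    have d2 := orderOf_dvd_of_pow_eq_one hn
    exact Nat.eq_one_of_dvd_coprimes hcop d1 d2
  have hu1 : u = 1 := orderOf_eq_one_iff.mp hord
  exact ⟨(tstar (a, 1) g).1, Prod.ext rfl hu1.symm⟩
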